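/- Let q be a prime, n ≥ 2 an integer, and Q a positive integer with Q < q. Let h* ∈ Z_q^n be nonzero, and let h^(1), …, h^(Q) ∈ Z_q^n be nonzero vectors, each distinct from h*. Let N be the number of vectors x ∈ Z_q^n such that 1 + ⟨x,h*⟩ = 0 and, for every j ∈ {1,…,Q}, 1 + ⟨x,h^(j)⟩ ≠ 0. Then q^{n−1} − Q·q^{n−2} ≤ N ≤ q^{n−1}. (Equivalently, for a uniformly random key x ∈ Z_q^n, the non-abort probability of the Waters hash family lies between (1/q)(1 − Q/q) and 1/q, i.e., the family H_{Wat} = {H_x(h) = 1 + Σ_i x_i h_i} is (Q, (1/q)(1−Q/q), 1/q) abort-resistant.) -/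

import Mathlib

open Finset

lemma card_fiber_mul {V W : Type*} [AddCommGroup V] [AddCommGroup W]
    [Fintype V] [Fintype W] [DecidableEq W] (f : V →+ W)
    (hf : Function.Surjective f) (b : W) :
    (Finset.univ.filter fun x => f x = b).card * Fintype.card W = Fintype.card V := by
  classical
  obtain ⟨x0, hx0⟩ := hf b
  have e1 : {x // f x = b} ≃ f.ker :=
    { toFun := fun y => ⟨y.1 - x0, by
        simp [AddMonoidHom.mem_ker, map_sub, y.2, hx0]⟩
      invFun := fun z => ⟨z.1 + x0, by
        have hz : f z.1 = 0 := z.2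
        simp [map_add, hz, hx0]⟩
      left_inv := fun y => by simp
      right_inv := fun z => by simp }
  have e2 : V ⧸ f.ker ≃+ W := QuotientAddGroup.quotientKerEquivOfSurjective f hf
  have h1 : (Finset.univ.filter fun x => f x = b).card = Nat.card f.ker := by
    rw [Nat.card_eq_fintype_card, ← Fintype.card_subtype]
    exact Fintype.card_congr e1
  have h2 : Nat.card (V ⧸ f.ker) * Nat.card f.ker = Nat.card V :=
    (AddSubgroup.card_eq_card_quotient_mul_card_addSubgroup f.ker).symm
  have h3 : Nat.card (V ⧸ f.ker) = Nat.card W := Nat.card_congr e2.toEquiv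
  rw [h1, mul_comm, ← Nat.card_eq_fintype_card, ← Nat.card_eq_fintype_card, ← h3, h2]

section
variable (q n : ℕ) [Fact q.Prime]

noncomputable def dotL (a : Fin n → ZMod q) :
    (Fin n → ZMod q) →ₗ[ZMod q] ZMod q where
  toFun x := ∑ i, x i * a i
  map_add' x y := by simp [add_mul, Finset.sum_add_distrib]
  map_smul' c x := by simp [Finset.mul_sum, mul_assoc]

lemma dotL_single (a : Fin n → ZMod q) (j : Fin n) :
    dotL q n a (Pi.single j 1) = a j := by
  simp only [dotL, LinearMap.coe_mk, AddHom.coe_mk]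
  rw [Finset.sum_eq_single j]
  · simp
  · intro i _ hij; simp [Pi.single_eq_of_ne hij]
  · simp

lemma dotL_surj (a : Fin n → ZMod q) (ha : a ≠ 0) :
    Function.Surjective (dotL q n a) := by
  obtain ⟨i, hi⟩ := Function.ne_iff.mp ha
  intro b
  refine ⟨(b * (a i)⁻¹) • (Pi.single i 1 : Fin n → ZMod q), ?_⟩
  rw [map_smul, dotL_single, smul_eq_mul, mul_assoc,
    inv_mul_cancel₀ (show a i ≠ 0 from hi), mul_one]

lemma card_two_le (hn : 2 ≤ n) (a a' : Fin n → ZMod q)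
    (ha : a ≠ 0) (hne : a' ≠ a) :
    (Finset.univ.filter fun x : Fin n → ZMod q =>
      (∑ i, x i * a i = -1) ∧ (∑ i, x i * a' i = -1)).card ≤ q ^ (n - 2) := by
  classical
  set S := Finset.univ.filter fun x : Fin n → ZMod q =>
      (∑ i, x i * a i = -1) ∧ (∑ i, x i * a' i = -1) with hS
  have hdot : ∀ x : Fin n → ZMod q, dotL q n a x = ∑ i, x i * a i := fun _ => rfl
  have hdot' : ∀ x : Fin n → ZMod q, dotL q n a' x = ∑ i, x i * a' i := fun _ => rfl
  rcases S.eq_empty_or_nonempty with hE | ⟨x0, hx0⟩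
  · simp [hE]
  · rw [hS, Finset.mem_filter] at hx0
    obtain ⟨-, hx0a, hx0a'⟩ := hx0
    obtain ⟨x1, hx1⟩ := dotL_surj q n a ha 1
    set c := dotL q n a' x1 with hc
    by_cases hcase : ∀ y, dotL q n a y = 0 → dotL q n a' y = 0
    · -- a' is proportional to a; contradiction with hne
      exfalso
      have hfac : ∀ x, dotL q n a' x = c * dotL q n a x := by
        intro x
        have hy : dotL q n a (x - (dotL q n a x) • x1) = 0 := by
          rw [map_sub, map_smul, hx1, smul_eq_mul, mul_one, sub_self]
        have := hcase _ hy
        rw [map_sub, map_smul, smul_eq_mul, ← hc] at this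
        have := sub_eq_zero.mp this
        rw [this, mul_comm]
      have hc1 : c = 1 := by
        have h1 := hfac x0
        rw [hdot', hdot, hx0a', hx0a] at h1
        linear_combination h1
      apply hne
      funext j
      have := hfac (Pi.single j 1)
      rw [dotL_single, dotL_single, hc1, one_mul] at this
      exact this
    · push_neg at hcase
      obtain ⟨y, hy0, hyd⟩ := hcase
      set d := dotL q n a' y with hd
      set ψ := (dotL q n a).prod (dotL q n a') with hψ
      have hsurj : Function.Surjective ψ := by
        rintro ⟨u, v⟩
        refine ⟨u • x1 + ((v - u * c) * d⁻¹) • y, ?_⟩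
        have h1 : dotL q n a (u • x1 + ((v - u * c) * d⁻¹) • y) = u := by
          rw [map_add, map_smul, map_smul, hx1, hy0, smul_eq_mul, smul_eq_mul,
            mul_one, mul_zero, add_zero]
        have h2 : dotL q n a' (u • x1 + ((v - u * c) * d⁻¹) • y) = v := by
          rw [map_add, map_smul, map_smul, ← hc, ← hd, smul_eq_mul, smul_eq_mul,
            mul_assoc, inv_mul_cancel₀ hyd, mul_one]
          ring
        rw [hψ]
        exact Prod.ext (by simpa using h1) (by simpa using h2)
      have key := card_fiber_mul ψ.toAddMonoidHom hsurj (-1, -1)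
      have hSeq : S = Finset.univ.filter fun x => ψ.toAddMonoidHom x = (-1, -1) := by
        apply Finset.filter_congr
        intro x _
        simp only [hψ, LinearMap.toAddMonoidHom_coe, LinearMap.prod_apply, Function.prod_apply,
          Prod.mk.injEq, hdot, hdot']
      have hcards : Fintype.card (ZMod q × ZMod q) = q * q := by
        rw [Fintype.card_prod, ZMod.card]
      have hV : Fintype.card (Fin n → ZMod q) = q ^ n := by
        rw [Fintype.card_fun, ZMod.card, Fintype.card_fin]
      rw [hcards, hV, ← hSeq] at key
      have hq : 0 < q := (Fact.out : q.Prime).pos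
      have hpow : q ^ (n - 2) * (q * q) = q ^ n := by
        rw [← pow_two, ← pow_add]; congr 1; omega
      have : S.card * (q * q) = q ^ (n - 2) * (q * q) := by rw [hpow]; exact key
      exact le_of_eq (Nat.eq_of_mul_eq_mul_right (by positivity) this)


lemma card_one_eq (hn : 1 ≤ n) (a : Fin n → ZMod q) (ha : a ≠ 0) (b : ZMod q) :
    (Finset.univ.filter fun x : Fin n → ZMod q => ∑ i, x i * a i = b).card = q ^ (n - 1) := by
  classical
  have key := card_fiber_mul ((dotL q n a).toAddMonoidHom) (dotL_surj q n a ha) b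
  have hcards : Fintype.card (ZMod q) = q := ZMod.card q
  have hV : Fintype.card (Fin n → ZMod q) = q ^ n := by
    rw [Fintype.card_fun, hcards, Fintype.card_fin]
  rw [hcards, hV] at key
  have hq : 0 < q := (Fact.out : q.Prime).pos
  have hpow : q ^ (n - 1) * q = q ^ n := by
    have hn1 : n - 1 + 1 = n := by omega
    rw [← hn1, pow_succ, hn1]
  have key2 : (Finset.univ.filter fun x : Fin n → ZMod q => ∑ i, x i * a i = b).card * q
      = q ^ (n - 1) * q := by rw [hpow]; exact key
  exact Nat.eq_of_mul_eq_mul_right hq key2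

end

/-- The Waters hash family is (Q, (1/q)(1−Q/q), 1/q) abort-resistant:
for a prime q, n ≥ 2, 0 < Q < q, a nonzero h* ∈ Z_q^n, and nonzero vectors
h^(1), …, h^(Q) each distinct from h*, the number N of keys x ∈ Z_q^n with
1 + ⟨x,h*⟩ = 0 and 1 + ⟨x,h^(j)⟩ ≠ 0 for all j satisfies
q^(n−1) − Q·q^(n−2) ≤ N ≤ q^(n−1). -/
theorem waters_hash_abort_resistant
    (q n Q : ℕ) [Fact q.Prime] (hn : 2 ≤ n) (hQpos : 0 < Q) (hQ : Q < q)
    (hstar : Fin n → ZMod q) (hhstar : hstar ≠ 0)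
    (h : Fin Q → Fin n → ZMod q) (hh : ∀ j, h j ≠ 0) (hne : ∀ j, h j ≠ hstar) :
    q ^ (n - 1) - Q * q ^ (n - 2) ≤
      (Finset.univ.filter
        (fun x : Fin n → ZMod q =>
          1 + ∑ i, x i * hstar i = 0 ∧ ∀ j, 1 + ∑ i, x i * h j i ≠ 0)).card ∧
    (Finset.univ.filter
        (fun x : Fin n → ZMod q =>
          1 + ∑ i, x i * hstar i = 0 ∧ ∀ j, 1 + ∑ i, x i * h j i ≠ 0)).card ≤
      q ^ (n - 1) := by
  classical
  have hiff : ∀ (v x : Fin n → ZMod q), (1 + ∑ i, x i * v i = 0) ↔ (∑ i, x i * v i = -1) := by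
    intro v x
    constructor <;> intro hh' <;> linear_combination hh'
  set T := Finset.univ.filter
      (fun x : Fin n → ZMod q =>
        1 + ∑ i, x i * hstar i = 0 ∧ ∀ j, 1 + ∑ i, x i * h j i ≠ 0) with hT
  set S := Finset.univ.filter (fun x : Fin n → ZMod q => ∑ i, x i * hstar i = -1) with hSdef
  have hTS : T ⊆ S := by
    intro x hx
    rw [hT, Finset.mem_filter] at hx
    rw [hSdef, Finset.mem_filter]
    exact ⟨Finset.mem_univ _, (hiff hstar x).mp hx.2.1⟩
  have hScard : S.card = q ^ (n - 1) := card_one_eq q n (by omega) hstar hhstar (-1)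
  have hsub : S \ T ⊆ Finset.univ.biUnion (fun j : Fin Q =>
      Finset.univ.filter (fun x : Fin n → ZMod q =>
        (∑ i, x i * hstar i = -1) ∧ (∑ i, x i * h j i = -1))) := by
    intro x hx
    rw [Finset.mem_sdiff] at hx
    obtain ⟨hxS, hxT⟩ := hx
    rw [hSdef, Finset.mem_filter] at hxS
    rw [hT, Finset.mem_filter] at hxT
    push_neg at hxT
    have h1 : 1 + ∑ i, x i * hstar i = 0 := (hiff hstar x).mpr hxS.2
    obtain ⟨j, hj⟩ := hxT (Finset.mem_univ _) h1
    rw [Finset.mem_biUnion]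
    exact ⟨j, Finset.mem_univ _, Finset.mem_filter.mpr
      ⟨Finset.mem_univ _, hxS.2, (hiff (h j) x).mp hj⟩⟩
  have hb : (S \ T).card ≤ Q * q ^ (n - 2) := by
    calc (S \ T).card ≤ _ := Finset.card_le_card hsub
      _ ≤ ∑ j : Fin Q, (Finset.univ.filter (fun x : Fin n → ZMod q =>
            (∑ i, x i * hstar i = -1) ∧ (∑ i, x i * h j i = -1))).card :=
          Finset.card_biUnion_le
      _ ≤ ∑ _j : Fin Q, q ^ (n - 2) := Finset.sum_le_sum
          (fun j _ => card_two_le q n hn hstar (h j) hhstar (hne j))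
      _ = Q * q ^ (n - 2) := by
          rw [Finset.sum_const, Finset.card_univ, Fintype.card_fin, smul_eq_mul]
  have hsplit : (S \ T).card + T.card = S.card := Finset.card_sdiff_add_card_eq_card hTS
  constructor
  · omega
  · calc T.card ≤ S.card := Finset.card_le_card hTS
      _ = q ^ (n - 1) := hScard
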